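/- The mean Euclidean distance between two independent uniformly random points of the unit square equals (2 + √2 + 5·log(1 + √2))/15; that is, the integral over ([0,1]²) × ([0,1]²) (with respect to 4-dimensional Lebesgue measure) of √((x₁ − y₁)² + (x₂ − y₂)²) d(x₁,x₂,y₁,y₂) equals (2 + √2 + 5·Real.log (1 + √2))/15. -/

import Mathlib

set_option maxHeartbeats 1000000

open MeasureTheory Real Filter

lemma hasDerivAt_pow_mul_abs (n : ℕ) (hn : 1 ≤ n) (t : ℝ) :
    HasDerivAt (fun t : ℝ => t ^ n * |t|) ((n + 1) * t ^ (n - 1) * |t|) t := by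
  rcases lt_trichotomy t 0 with ht | rfl | ht
  · have he : (fun s : ℝ => -(s ^ (n + 1))) =ᶠ[nhds t] fun s : ℝ => s ^ n * |s| := by
      filter_upwards [Iio_mem_nhds ht] with s hs
      rw [abs_of_neg hs]; ring
    have h := (hasDerivAt_pow (n + 1) t).neg
    have h2 := h.congr_of_eventuallyEq he.symm
    convert h2 using 1
    · rfl
    · rfl
    rw [abs_of_neg ht]
    push_cast
    rw [show t ^ n = t ^ (n-1) * t from by rw [← pow_succ, Nat.sub_add_cancel hn]]
    ring
  · have h0 : ((n : ℝ) + 1) * (0:ℝ) ^ (n - 1) * |(0:ℝ)| = 0 := by simp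
    rw [h0, hasDerivAt_iff_tendsto_slope]
    have hcont : Tendsto (fun s : ℝ => s ^ (n - 1) * |s|) (nhdsWithin 0 {(0:ℝ)}ᶜ) (nhds 0) := by
      have : Tendsto (fun s : ℝ => s ^ (n - 1) * |s|) (nhds 0) (nhds 0) := by
        have := ((continuous_pow (n-1)).mul continuous_abs).tendsto (0:ℝ)
        simpa [Pi.mul_def] using this
      exact this.mono_left nhdsWithin_le_nhds
    refine hcont.congr' ?_
    filter_upwards [self_mem_nhdsWithin] with s hs
    have hs' : s ≠ 0 := hs
    rw [slope_def_field]
    field_simp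
    conv_rhs => rw [show n = (n-1) + 1 by omega]
    ring
  · have he : (fun s : ℝ => s ^ (n + 1)) =ᶠ[nhds t] fun s : ℝ => s ^ n * |s| := by
      filter_upwards [Ioi_mem_nhds ht] with s hs
      rw [abs_of_pos hs]; ring
    have h2 := (hasDerivAt_pow (n + 1) t).congr_of_eventuallyEq he.symm
    convert h2 using 1
    · rfl
    · rfl
    rw [abs_of_pos ht]
    push_cast
    rw [show t ^ n = t ^ (n-1) * t from by rw [← pow_succ, Nat.sub_add_cancel hn]]
    ring

lemma abs_pow_mul_log_le {c : ℝ} (n : ℕ) (hn : 2 ≤ n) (h1 : |c| ≤ 1) :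
    |c ^ n * Real.log c| ≤ |c| := by
  rcases eq_or_ne c 0 with rfl | hc
  · simp [Real.log_zero, zero_pow (by omega : n ≠ 0)]
  · have habs : (0:ℝ) < |c| := abs_pos.mpr hc
    have hlog : |Real.log c| ≤ |c|⁻¹ := by
      rw [← Real.log_abs]
      rcases le_or_gt 0 (Real.log |c|) with h | h
      · have : Real.log |c| ≤ 0 := Real.log_nonpos (le_of_lt habs) h1
        have h0 : Real.log |c| = 0 := le_antisymm this h
        rw [abs_of_nonneg h, h0]; positivity
      · rw [abs_of_neg h, ← Real.log_inv]
        have := Real.log_le_sub_one_of_pos (x := |c|⁻¹) (by positivity)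
        linarith
    calc |c ^ n * Real.log c| = |c| ^ n * |Real.log c| := by rw [abs_mul, abs_pow]
      _ ≤ |c| ^ n * |c|⁻¹ := by
          exact mul_le_mul_of_nonneg_left hlog (by positivity)
      _ = |c| ^ (n - 1) := by
          rw [show n = (n-1)+1 by omega, pow_succ]
          field_simp
          simp
      _ ≤ |c| ^ 1 := pow_le_pow_of_le_one (abs_nonneg c) h1 (by omega)
      _ = |c| := pow_one _

lemma tendsto_pow_mul_log (n : ℕ) (hn : 2 ≤ n) :
    Tendsto (fun c : ℝ => c ^ n * Real.log c) (nhds 0) (nhds 0) := by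
  apply squeeze_zero_norm'
  · filter_upwards [Metric.ball_mem_nhds (0:ℝ) one_pos] with c hc
    have : |c| ≤ 1 := le_of_lt (by simpa [Real.dist_eq] using hc)
    exact abs_pow_mul_log_le n hn this
  · simpa using (continuous_abs.tendsto (0:ℝ))

lemma hasDerivAt_pow_mul_log {n : ℕ} (hn : 3 ≤ n) (c : ℝ) :
    HasDerivAt (fun c : ℝ => c ^ n * Real.log c)
      (n * c ^ (n - 1) * Real.log c + c ^ (n - 1)) c := by
  rcases eq_or_ne c 0 with rfl | hc
  · have h0 : (n : ℝ) * (0:ℝ) ^ (n - 1) * Real.log 0 + (0:ℝ) ^ (n - 1) = 0 := by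
      simp [zero_pow (by omega : n - 1 ≠ 0)]
    rw [h0, hasDerivAt_iff_tendsto_slope]
    have hcont : Tendsto (fun s : ℝ => s ^ (n - 1) * Real.log s) (nhdsWithin 0 {(0:ℝ)}ᶜ) (nhds 0) :=
      (tendsto_pow_mul_log (n-1) (by omega)).mono_left nhdsWithin_le_nhds
    refine hcont.congr' ?_
    filter_upwards [self_mem_nhdsWithin] with s hs
    have hs' : (s:ℝ) ≠ 0 := hs
    have hp : s ^ n = s ^ (n-1) * s := by rw [← pow_succ, Nat.sub_add_cancel (by omega : 1 ≤ n)]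
    rw [slope_def_field, hp, Real.log_zero, mul_zero, sub_zero, sub_zero]
    field_simp
  · have h := (hasDerivAt_pow n c).mul (Real.hasDerivAt_log hc)
    have hp : c ^ n = c ^ (n-1) * c := by rw [← pow_succ, Nat.sub_add_cancel (by omega : 1 ≤ n)]
    convert h using 2
    · rfl
    · rfl
    · rfl
    rw [hp]
    field_simp

lemma continuous_sq_mul_log : Continuous (fun c : ℝ => c ^ 2 * Real.log c) := by
  rw [continuous_iff_continuousAt]
  intro c
  rcases eq_or_ne c 0 with rfl | hc
  · have : ContinuousAt (fun c : ℝ => c ^ 2 * Real.log c) 0 := by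
      unfold ContinuousAt
      simpa using tendsto_pow_mul_log 2 le_rfl
    exact this
  · exact (continuous_pow 2).continuousAt.mul (Real.continuousAt_log hc)

lemma hasDerivAt_sq1 (c : ℝ) : HasDerivAt (fun c : ℝ => Real.sqrt (1 + c ^ 2))
    (c / Real.sqrt (1 + c ^ 2)) c := by
  have h1 : HasDerivAt (fun c : ℝ => 1 + c ^ 2) (2 * c) c := by
    simpa using ((hasDerivAt_pow 2 c).const_add 1)
  have h2 : (1:ℝ) + c ^ 2 ≠ 0 := by positivity
  have := (Real.hasDerivAt_sqrt h2).comp c h1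
  convert this using 1
  · rfl
  · rfl
  · rfl
  field_simp

lemma conv_sq {h H H2 : ℝ → ℝ}
    (hH : ∀ t, HasDerivAt H (h t) t)
    (hH2 : ∀ t, HasDerivAt H2 (H t) t)
    (hint : ∀ y : ℝ, IntervalIntegrable (fun x => h (x - y)) volume 0 1) :
    (∫ y in (0:ℝ)..1, ∫ x in (0:ℝ)..1, h (x - y)) = H2 1 + H2 (-1) - 2 * H2 0 := by
  have hHc : Continuous H := Differentiable.continuous (fun t => (hH t).differentiableAt)
  have inner : ∀ y : ℝ, (∫ x in (0:ℝ)..1, h (x - y)) = H (1 - y) - H (0 - y) := by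
    intro y
    have hd : ∀ x ∈ Set.uIcc (0:ℝ) 1, HasDerivAt (fun x => H (x - y)) (h (x - y)) x := by
      intro x _
      have := (HasDerivAt.comp x (hH (x - y)) ((hasDerivAt_id x).sub_const y))
      simp at this
      exact this
    rw [intervalIntegral.integral_eq_sub_of_hasDerivAt hd (hint y)]
  rw [intervalIntegral.integral_congr (g := fun y => H (1 - y) - H (0 - y))
      (fun y _ => inner y)]
  have hd2 : ∀ y ∈ Set.uIcc (0:ℝ) 1,
      HasDerivAt (fun y => -H2 (1 - y) + H2 (0 - y)) (H (1 - y) - H (0 - y)) y := by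
    intro y _
    have h1 : HasDerivAt (fun y : ℝ => H2 (1 - y)) (H (1 - y) * (-1)) y :=
      HasDerivAt.comp y (hH2 (1 - y)) ((hasDerivAt_id y).const_sub 1)
    have h2 : HasDerivAt (fun y : ℝ => H2 (0 - y)) (H (0 - y) * (-1)) y :=
      HasDerivAt.comp y (hH2 (0 - y)) ((hasDerivAt_id y).const_sub 0)
    have := h1.neg.add h2
    convert this using 1
    · rfl
    · rfl
    · rfl
    ring
  have hint2 : IntervalIntegrable (fun y : ℝ => H (1 - y) - H (0 - y)) volume 0 1 := by
    apply Continuous.intervalIntegrable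
    exact (hHc.comp (continuous_const.sub continuous_id)).sub
      (hHc.comp (continuous_const.sub continuous_id))
  rw [intervalIntegral.integral_eq_sub_of_hasDerivAt hd2 hint2]
  norm_num
  ring

lemma swap_interval (f : ℝ → ℝ → ℝ) (hf : Continuous (Function.uncurry f)) :
    (∫ x in (0:ℝ)..1, ∫ y in (0:ℝ)..1, f x y) = ∫ y in (0:ℝ)..1, ∫ x in (0:ℝ)..1, f x y := by
  have h01 : (0:ℝ) ≤ 1 := zero_le_one
  have hInt : MeasureTheory.Integrable (Function.uncurry f)
      ((volume.restrict (Set.Ioc (0:ℝ) 1)).prod (volume.restrict (Set.Ioc (0:ℝ) 1))) := by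
    rw [MeasureTheory.Measure.prod_restrict]
    refine MeasureTheory.Integrable.mono_measure
      (ν := (volume.prod volume).restrict ((Set.Icc (0:ℝ) 1) ×ˢ (Set.Icc (0:ℝ) 1))) ?_ ?_
    · exact hf.continuousOn.integrableOn_compact (isCompact_Icc.prod isCompact_Icc)
    · exact MeasureTheory.Measure.restrict_mono
        (Set.prod_mono Set.Ioc_subset_Icc_self Set.Ioc_subset_Icc_self) le_rfl
  have key := MeasureTheory.integral_integral_swap hInt
  rw [intervalIntegral.integral_of_le h01, intervalIntegral.integral_of_le h01]
  simp_rw [intervalIntegral.integral_of_le h01]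
  exact key

noncomputable def gE (c : ℝ) : ℝ :=
  Real.sqrt (1+c^2)^3/3 + c^2 * Real.log (1 + Real.sqrt (1+c^2)) - c^2 * Real.log c
    - c^2 * Real.sqrt (1+c^2) + 2*(c^2*|c|)/3

noncomputable def Gg (c : ℝ) : ℝ :=
  -(c * Real.sqrt (1+c^2)^3)/6 + 5/12 * (c * Real.sqrt (1+c^2)) + Real.arsinh c / 12
    + c^3 * Real.log (1 + Real.sqrt (1+c^2))/3 - c^3 * Real.log c/3 + c^3 * |c|/6

noncomputable def G2 (c : ℝ) : ℝ :=
  -(Real.sqrt (1+c^2)^5)/30 + Real.sqrt (1+c^2)^3/6 - Real.sqrt (1+c^2)/6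
    + c * Real.arsinh c/12 + c^4 * Real.log (1 + Real.sqrt (1+c^2))/12
    - c^4 * Real.log c/12 + c^4 * |c|/30

lemma hasDerivAt_Gg (c : ℝ) : HasDerivAt Gg (gE c) c := by
  have hspos : 0 < Real.sqrt (1+c^2) := Real.sqrt_pos.mpr (by positivity)
  have hs2 : Real.sqrt (1+c^2) ^ 2 = 1+c^2 := Real.sq_sqrt (by positivity)
  have h1s : (1:ℝ) + Real.sqrt (1+c^2) ≠ 0 := by positivity
  have hs := hasDerivAt_sq1 c
  have h1 : HasDerivAt (fun c : ℝ => c * Real.sqrt (1+c^2)^3)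
      (1 * Real.sqrt (1+c^2)^3 + c * (3 * Real.sqrt (1+c^2)^2 * (c / Real.sqrt (1+c^2)))) c :=
    (hasDerivAt_id c).mul (hs.pow 3)
  have h2 : HasDerivAt (fun c : ℝ => c * Real.sqrt (1+c^2))
      (1 * Real.sqrt (1+c^2) + c * (c / Real.sqrt (1+c^2))) c :=
    (hasDerivAt_id c).mul hs
  have h3 := Real.hasDerivAt_arsinh c
  have hlog1s : HasDerivAt (fun c : ℝ => Real.log (1 + Real.sqrt (1+c^2)))
      ((1 + Real.sqrt (1+c^2))⁻¹ * (c / Real.sqrt (1+c^2))) c :=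
    (Real.hasDerivAt_log h1s).comp (h₂ := Real.log) c (hs.const_add 1)
  have h4 : HasDerivAt (fun c : ℝ => c^3 * Real.log (1 + Real.sqrt (1+c^2)))
      (3 * c^2 * Real.log (1 + Real.sqrt (1+c^2))
        + c^3 * ((1 + Real.sqrt (1+c^2))⁻¹ * (c / Real.sqrt (1+c^2)))) c := by
    have := (hasDerivAt_pow 3 c).mul hlog1s
    convert this using 1
    · rfl
    · rfl
    · rfl
    norm_num
  have h5 : HasDerivAt (fun c : ℝ => c^3 * Real.log c) (3 * c^2 * Real.log c + c^2) c := by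
    have := hasDerivAt_pow_mul_log (le_refl 3) c
    convert this using 1
    norm_num
  have h6 : HasDerivAt (fun c : ℝ => c^3 * |c|) (4 * c^2 * |c|) c := by
    have := hasDerivAt_pow_mul_abs 3 (by norm_num) c
    convert this using 1
    norm_num
  have hG := ((((((h1.neg).div_const 6).add (h2.const_mul (5/12))).add
      (h3.div_const 12)).add (h4.div_const 3)).sub (h5.div_const 3)).add (h6.div_const 6)
  have heq : Gg = fun c : ℝ => -(c * Real.sqrt (1+c^2)^3)/6 + 5/12 * (c * Real.sqrt (1+c^2))
      + Real.arsinh c / 12 + c^3 * Real.log (1 + Real.sqrt (1+c^2))/3 - c^3 * Real.log c/3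
      + c^3 * |c|/6 := rfl
  rw [heq]
  convert hG using 1
  · rfl
  · rfl
  · rfl
  unfold gE
  have e3 : Real.sqrt (1+c^2)^3 = (1+c^2) * Real.sqrt (1+c^2) := by
    rw [pow_succ, hs2]
  have hsne : Real.sqrt (1+c^2) ≠ 0 := ne_of_gt hspos
  rw [e3, hs2]
  field_simp
  ring_nf
  have e4 : Real.sqrt (1+c^2)^4 = (1+c^2)^2 := by
    rw [show Real.sqrt (1+c^2)^4 = (Real.sqrt (1+c^2)^2)^2 by ring, hs2]
  have e5 : Real.sqrt (1+c^2)^5 = (1+c^2)^2 * Real.sqrt (1+c^2) := by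
    rw [show Real.sqrt (1+c^2)^5 = (Real.sqrt (1+c^2)^2)^2 * Real.sqrt (1+c^2) by ring, hs2]
  have e6 : Real.sqrt (1+c^2)^6 = (1+c^2)^3 := by
    rw [show Real.sqrt (1+c^2)^6 = (Real.sqrt (1+c^2)^2)^3 by ring, hs2]
  simp only [e6, e5, e4, e3, hs2]
  ring

lemma hasDerivAt_G2 (c : ℝ) : HasDerivAt G2 (Gg c) c := by
  have hspos : 0 < Real.sqrt (1+c^2) := Real.sqrt_pos.mpr (by positivity)
  have hs2 : Real.sqrt (1+c^2) ^ 2 = 1+c^2 := Real.sq_sqrt (by positivity)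
  have h1s : (1:ℝ) + Real.sqrt (1+c^2) ≠ 0 := by positivity
  have hsne : Real.sqrt (1+c^2) ≠ 0 := ne_of_gt hspos
  have hs := hasDerivAt_sq1 c
  have h3 := Real.hasDerivAt_arsinh c
  have hlog1s : HasDerivAt (fun c : ℝ => Real.log (1 + Real.sqrt (1+c^2)))
      ((1 + Real.sqrt (1+c^2))⁻¹ * (c / Real.sqrt (1+c^2))) c :=
    (Real.hasDerivAt_log h1s).comp (h₂ := Real.log) c (hs.const_add 1)
  have k1 := ((hs.pow 5).neg).div_const 30
  have k2 := (hs.pow 3).div_const 6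
  have k3 := hs.div_const 6
  have k4 := ((hasDerivAt_id c).mul h3).div_const 12
  have k5 := ((hasDerivAt_pow 4 c).mul hlog1s).div_const 12
  have k6 := (hasDerivAt_pow_mul_log (by norm_num : 3 ≤ 4) c).div_const 12
  have k7 := (hasDerivAt_pow_mul_abs 4 (by norm_num) c).div_const 30
  have hG := (((((k1.add k2).sub k3).add k4).add k5).sub k6).add k7
  have heq : G2 = fun c : ℝ => -(Real.sqrt (1+c^2)^5)/30 + Real.sqrt (1+c^2)^3/6
      - Real.sqrt (1+c^2)/6 + c * Real.arsinh c/12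
      + c^4 * Real.log (1 + Real.sqrt (1+c^2))/12 - c^4 * Real.log c/12
      + c^4 * |c|/30 := rfl
  rw [heq]
  convert hG using 1
  · rfl
  · rfl
  · rfl
  unfold Gg
  have e3 : Real.sqrt (1+c^2)^3 = (1+c^2) * Real.sqrt (1+c^2) := by
    rw [pow_succ, hs2]
  rw [e3]
  field_simp
  ring_nf
  have e4 : Real.sqrt (1+c^2)^4 = (1+c^2)^2 := by
    rw [show Real.sqrt (1+c^2)^4 = (Real.sqrt (1+c^2)^2)^2 by ring, hs2]
  have e5 : Real.sqrt (1+c^2)^5 = (1+c^2)^2 * Real.sqrt (1+c^2) := by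
    rw [show Real.sqrt (1+c^2)^5 = (Real.sqrt (1+c^2)^2)^2 * Real.sqrt (1+c^2) by ring, hs2]
  have e6 : Real.sqrt (1+c^2)^6 = (1+c^2)^3 := by
    rw [show Real.sqrt (1+c^2)^6 = (Real.sqrt (1+c^2)^2)^3 by ring, hs2]
  have e7 : Real.sqrt (1+c^2)^7 = (1+c^2)^3 * Real.sqrt (1+c^2) := by
    rw [show Real.sqrt (1+c^2)^7 = (Real.sqrt (1+c^2)^2)^3 * Real.sqrt (1+c^2) by ring, hs2]
  have e8 : Real.sqrt (1+c^2)^8 = (1+c^2)^4 := by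
    rw [show Real.sqrt (1+c^2)^8 = (Real.sqrt (1+c^2)^2)^4 by ring, hs2]
  have e9 : Real.sqrt (1+c^2)^9 = (1+c^2)^4 * Real.sqrt (1+c^2) := by
    rw [show Real.sqrt (1+c^2)^9 = (Real.sqrt (1+c^2)^2)^4 * Real.sqrt (1+c^2) by ring, hs2]
  simp only [e9, e8, e7, e6, e5, e4, e3, hs2, id]
  ring

noncomputable def ph (r t : ℝ) : ℝ :=
  (t * Real.sqrt (t^2 + r^2) + r^2 * Real.arsinh (t/r))/2

noncomputable def Ph (r t : ℝ) : ℝ :=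
  Real.sqrt (t^2 + r^2)^3/6 + r^2/2 * (t * Real.arsinh (t/r) - Real.sqrt (t^2 + r^2))

lemma sqrt_one_add_inv_sq {r : ℝ} (hr : 0 < r) :
    Real.sqrt (1 + (1/r)^2) = Real.sqrt (1 + r^2) / r := by
  rw [show 1 + (1/r)^2 = (r^2 + 1)/r^2 by field_simp,
    Real.sqrt_div (by positivity) _, Real.sqrt_sq (le_of_lt hr)]
  rw [show r^2 + 1 = 1 + r^2 by ring]

lemma arsinh_inv {r : ℝ} (hr : 0 < r) :
    Real.arsinh (1/r) = Real.log (1 + Real.sqrt (1 + r^2)) - Real.log r := by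
  unfold Real.arsinh
  rw [sqrt_one_add_inv_sq hr,
    show 1/r + Real.sqrt (1 + r^2)/r = (1 + Real.sqrt (1 + r^2))/r by ring,
    Real.log_div (by positivity) (ne_of_gt hr)]

lemma hasDerivAt_sqrt_sq_add {r : ℝ} (hr : 0 < r) (t : ℝ) :
    HasDerivAt (fun t : ℝ => Real.sqrt (t^2 + r^2)) (t / Real.sqrt (t^2 + r^2)) t := by
  have h2 : t^2 + r^2 ≠ 0 := by positivity
  have h1 : HasDerivAt (fun t : ℝ => t^2 + r^2) (2*t) t := by
    simpa using (hasDerivAt_pow 2 t).add_const (r^2)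
  have := (Real.hasDerivAt_sqrt h2).comp t h1
  convert this using 1
  · rfl
  · rfl
  · funext x; simp [add_comm]
  field_simp

lemma hasDerivAt_ph {r : ℝ} (hr : 0 < r) (t : ℝ) :
    HasDerivAt (ph r) (Real.sqrt (t^2 + r^2)) t := by
  have hu2 : Real.sqrt (t^2 + r^2)^2 = t^2 + r^2 := Real.sq_sqrt (by positivity)
  have hupos : 0 < Real.sqrt (t^2 + r^2) := Real.sqrt_pos.mpr (by positivity)
  have hu := hasDerivAt_sqrt_sq_add hr t
  have hq : Real.sqrt (1 + (t/r)^2) = Real.sqrt (t^2 + r^2) / r := by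
    rw [show 1 + (t/r)^2 = (t^2 + r^2)/r^2 by field_simp; ring,
      Real.sqrt_div (by positivity) _, Real.sqrt_sq (le_of_lt hr)]
  have harsinh : HasDerivAt (fun t : ℝ => Real.arsinh (t/r))
      ((Real.sqrt (t^2+r^2)/r)⁻¹ * (1/r)) t := by
    have := (Real.hasDerivAt_arsinh (t/r)).comp t ((hasDerivAt_id t).div_const r)
    simp only [hq] at this
    exact this
  have hG := (((hasDerivAt_id t).mul hu).add (harsinh.const_mul (r^2))).div_const 2
  have heq : ph r = fun t : ℝ =>
      (t * Real.sqrt (t^2 + r^2) + r^2 * Real.arsinh (t/r))/2 := rfl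
  rw [heq]
  convert hG using 1
  · rfl
  · rfl
  · rfl
  have e3 : Real.sqrt (t^2+r^2)^3 = (t^2+r^2) * Real.sqrt (t^2+r^2) := by
    rw [pow_succ, hu2]
  have e4 : Real.sqrt (t^2+r^2)^4 = (t^2+r^2)^2 := by
    rw [show Real.sqrt (t^2+r^2)^4 = (Real.sqrt (t^2+r^2)^2)^2 by ring, hu2]
  field_simp
  ring_nf
  simp only [e3, e4, hu2, id]
  ring

lemma hasDerivAt_Ph {r : ℝ} (hr : 0 < r) (t : ℝ) :
    HasDerivAt (Ph r) (ph r t) t := by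
  have hu2 : Real.sqrt (t^2 + r^2)^2 = t^2 + r^2 := Real.sq_sqrt (by positivity)
  have hupos : 0 < Real.sqrt (t^2 + r^2) := Real.sqrt_pos.mpr (by positivity)
  have hu := hasDerivAt_sqrt_sq_add hr t
  have hq : Real.sqrt (1 + (t/r)^2) = Real.sqrt (t^2 + r^2) / r := by
    rw [show 1 + (t/r)^2 = (t^2 + r^2)/r^2 by field_simp; ring,
      Real.sqrt_div (by positivity) _, Real.sqrt_sq (le_of_lt hr)]
  have harsinh : HasDerivAt (fun t : ℝ => Real.arsinh (t/r))
      ((Real.sqrt (t^2+r^2)/r)⁻¹ * (1/r)) t := by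
    have := (Real.hasDerivAt_arsinh (t/r)).comp t ((hasDerivAt_id t).div_const r)
    simp only [hq] at this
    exact this
  have hG := ((hu.pow 3).div_const 6).add
    ((((hasDerivAt_id t).mul harsinh).sub hu).const_mul (r^2/2))
  have heq : Ph r = fun t : ℝ => Real.sqrt (t^2 + r^2)^3/6
      + r^2/2 * (t * Real.arsinh (t/r) - Real.sqrt (t^2 + r^2)) := rfl
  rw [heq]
  convert hG using 1
  · rfl
  · rfl
  · rfl
  unfold ph
  have e3 : Real.sqrt (t^2+r^2)^3 = (t^2+r^2) * Real.sqrt (t^2+r^2) := by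
    rw [pow_succ, hu2]
  have e4 : Real.sqrt (t^2+r^2)^4 = (t^2+r^2)^2 := by
    rw [show Real.sqrt (t^2+r^2)^4 = (Real.sqrt (t^2+r^2)^2)^2 by ring, hu2]
  simp only [e3, id]
  field_simp
  ring_nf

lemma hasDerivAt_ph0 (t : ℝ) : HasDerivAt (ph 0) (Real.sqrt (t^2 + (0:ℝ)^2)) t := by
  have heq : ph 0 = fun t : ℝ => t^1 * |t| / 2 := by
    funext s
    unfold ph
    simp [Real.sqrt_sq_eq_abs]
  rw [heq, show Real.sqrt (t^2 + (0:ℝ)^2) = |t| by simp [Real.sqrt_sq_eq_abs]]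
  have := (hasDerivAt_pow_mul_abs 1 le_rfl t).div_const 2
  convert this using 1
  · rfl
  · rfl
  norm_num

lemma hasDerivAt_Ph0 (t : ℝ) : HasDerivAt (Ph 0) (ph 0 t) t := by
  have heq : Ph 0 = fun t : ℝ => t^2 * |t| / 6 := by
    funext s
    unfold Ph
    rw [show s^2 + (0:ℝ)^2 = s^2 by ring, Real.sqrt_sq_eq_abs]
    have : |s|^3 = s^2 * |s| := by
      rw [pow_succ, sq_abs]
    rw [this]; ring
  have heq2 : ph 0 t = t * |t| / 2 := by
    unfold ph
    simp [Real.sqrt_sq_eq_abs]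
  rw [heq, heq2]
  have := (hasDerivAt_pow_mul_abs 2 (by norm_num) t).div_const 6
  convert this using 1
  · rfl
  · rfl
  norm_num
  ring


lemma continuous_gE : Continuous gE := by
  have hsq : Continuous (fun c : ℝ => Real.sqrt (1 + c^2)) :=
    Real.continuous_sqrt.comp (by fun_prop)
  have hlog1s : Continuous (fun c : ℝ => Real.log (1 + Real.sqrt (1 + c^2))) := by
    rw [continuous_iff_continuousAt]
    intro c
    exact (Real.continuousAt_log (by positivity)).comp (by fun_prop)
  unfold gE
  have h2 : Continuous (fun c : ℝ => c ^ 2 * Real.log c) := continuous_sq_mul_log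
  fun_prop

lemma level1 (c : ℝ) :
    (∫ y in (0:ℝ)..1, ∫ x in (0:ℝ)..1, Real.sqrt ((x - y)^2 + c^2)) = gE c := by
  have habs : |c|^2 = c^2 := sq_abs c
  have hH : ∀ t, HasDerivAt (ph |c|) (Real.sqrt (t^2 + c^2)) t := by
    intro t
    rcases eq_or_ne c 0 with rfl | hc
    · simpa using hasDerivAt_ph0 t
    · have := hasDerivAt_ph (abs_pos.mpr hc) t
      rwa [habs] at this
  have hH2 : ∀ t, HasDerivAt (Ph |c|) (ph |c| t) t := by
    intro t
    rcases eq_or_ne c 0 with rfl | hc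
    · simpa using hasDerivAt_Ph0 t
    · exact hasDerivAt_Ph (abs_pos.mpr hc) t
  have hint : ∀ y : ℝ, IntervalIntegrable (fun x : ℝ => Real.sqrt ((x - y)^2 + c^2))
      volume 0 1 := by
    intro y
    apply Continuous.intervalIntegrable
    exact Real.continuous_sqrt.comp (by fun_prop)
  have key : (∫ y in (0:ℝ)..1, ∫ x in (0:ℝ)..1, Real.sqrt ((x - y)^2 + c^2))
      = Ph |c| 1 + Ph |c| (-1) - 2 * Ph |c| 0 :=
    conv_sq hH hH2 hint
  rw [key]
  rcases eq_or_ne c 0 with rfl | hc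
  · unfold Ph gE
    norm_num
  · have hr : 0 < |c| := abs_pos.mpr hc
    unfold Ph gE
    have h1 : ((1:ℝ))^2 + |c|^2 = 1 + c^2 := by rw [one_pow, habs]
    have h2 : ((-1:ℝ))^2 + |c|^2 = 1 + c^2 := by rw [neg_one_sq, habs]
    have h3 : ((0:ℝ))^2 + |c|^2 = c^2 := by rw [habs]; ring
    have h4 : Real.arsinh (1/|c|) = Real.log (1 + Real.sqrt (1 + c^2)) - Real.log c := by
      rw [arsinh_inv hr, habs, Real.log_abs]
    have h5 : (-1 : ℝ)/|c| = -(1/|c|) := by ring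
    have h6 : Real.sqrt (c^2) = |c| := Real.sqrt_sq_eq_abs c
    have h7 : |c|^3 = c^2 * |c| := by rw [pow_succ, habs]
    rw [h1, h2, h3, h5, Real.arsinh_neg, h6, h7]
    rw [show (0:ℝ)/|c| = 0 by simp, Real.arsinh_zero]
    rw [show (1:ℝ)/|c| = 1/|c| from rfl, h4]
    ring_nf
    simp only [h7, habs]
    ring

/-- The mean Euclidean distance between two independent uniformly random points of
the unit square equals `(2 + √2 + 5·log(1 + √2))/15`. -/
theorem mean_distance_unit_square :
    (∫ y₂ in (0:ℝ)..1, ∫ y₁ in (0:ℝ)..1, ∫ x₂ in (0:ℝ)..1, ∫ x₁ in (0:ℝ)..1,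
        Real.sqrt ((x₁ - y₁) ^ 2 + (x₂ - y₂) ^ 2)) =
      (2 + Real.sqrt 2 + 5 * Real.log (1 + Real.sqrt 2)) / 15 := by
  have step1 : ∀ y₂ : ℝ, (∫ y₁ in (0:ℝ)..1, ∫ x₂ in (0:ℝ)..1, ∫ x₁ in (0:ℝ)..1,
      Real.sqrt ((x₁ - y₁) ^ 2 + (x₂ - y₂) ^ 2)) = ∫ x₂ in (0:ℝ)..1, gE (x₂ - y₂) := by
    intro y₂
    have hcont : Continuous (Function.uncurry (fun y₁ x₂ : ℝ => ∫ x₁ in (0:ℝ)..1,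
        Real.sqrt ((x₁ - y₁) ^ 2 + (x₂ - y₂) ^ 2))) := by
      apply intervalIntegral.continuous_parametric_intervalIntegral_of_continuous'
      apply Real.continuous_sqrt.comp
      fun_prop
    have hsw := swap_interval (fun y₁ x₂ : ℝ => ∫ x₁ in (0:ℝ)..1,
        Real.sqrt ((x₁ - y₁) ^ 2 + (x₂ - y₂) ^ 2)) hcont
    rw [hsw]
    apply intervalIntegral.integral_congr
    intro x₂ _
    have := level1 (x₂ - y₂)
    simpa using this
  rw [intervalIntegral.integral_congr (g := fun y₂ => ∫ x₂ in (0:ℝ)..1, gE (x₂ - y₂))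
    (fun y₂ _ => step1 y₂)]
  have hint : ∀ y : ℝ, IntervalIntegrable (fun x : ℝ => gE (x - y)) volume 0 1 := fun y =>
    (continuous_gE.comp (continuous_id.sub continuous_const)).intervalIntegrable 0 1
  rw [conv_sq hasDerivAt_Gg hasDerivAt_G2 hint]
  -- numeric evaluation
  have h2 : ((1:ℝ) + 1^2) = 2 := by norm_num
  have hm : ((1:ℝ) + (-1)^2) = 2 := by norm_num
  have h0 : ((1:ℝ) + 0^2) = 1 := by norm_num
  have hs2 : Real.sqrt 2 ^ 2 = 2 := Real.sq_sqrt (by norm_num)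
  have e3 : Real.sqrt 2 ^ 3 = 2 * Real.sqrt 2 := by
    rw [pow_succ, hs2]
  have e5 : Real.sqrt 2 ^ 5 = 4 * Real.sqrt 2 := by
    rw [show Real.sqrt 2 ^ 5 = (Real.sqrt 2 ^ 2)^2 * Real.sqrt 2 by ring, hs2]
    norm_num
  have har : Real.arsinh 1 = Real.log (1 + Real.sqrt 2) := by
    unfold Real.arsinh
    norm_num
  have harm : Real.arsinh (-1) = -Real.log (1 + Real.sqrt 2) := by
    rw [show (-1 : ℝ) = -(1:ℝ) by norm_num, Real.arsinh_neg, har]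
  unfold G2
  rw [h2, hm, h0]
  rw [har, harm, e3, e5]
  rw [Real.log_one, Real.sqrt_one]
  rw [show Real.log (-1 : ℝ) = 0 by rw [← Real.log_abs]; norm_num]
  norm_num
  ring
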